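/- Let μ and ν be Borel probability measures on ℝ and ε > 0. If the Prohorov distance d_P(μ, ν) < ε, then for any κ ∈ (0, 1) with κ + ε < 1, we have pd(μ; 1 - (κ + ε)) ≤ pd(ν; 1 - κ) + 2ε. -/

import Mathlib

open MeasureTheory Set
open scoped ENNReal

/-- The `α`-partial diameter of a Borel measure on `ℝ`. -/
noncomputable def partialDiam (μ : Measure ℝ) (α : ℝ) : ℝ≥0∞ :=
  ⨅ I ∈ {I : Set ℝ | MeasurableSet I ∧ ENNReal.ofReal α ≤ μ I}, EMetric.diam I

/-- The Prohorov distance between two Borel measures on `ℝ`: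
`inf { ε ≥ 0 : μ(U(A,ε)) ≥ ν(A) - ε for all Borel A }`. -/
noncomputable def prohorovDist (μ ν : Measure ℝ) : ℝ :=
  sInf {ε : ℝ | 0 ≤ ε ∧ ∀ A : Set ℝ, MeasurableSet A →
    ν A ≤ μ (Metric.thickening ε A) + ENNReal.ofReal ε}

theorem partialDiam_le_of_prohorov_lt (μ ν : Measure ℝ)
    [IsProbabilityMeasure μ] [IsProbabilityMeasure ν]
    (ε : ℝ) (hε : 0 < ε) (h : prohorovDist μ ν < ε)
    (κ : ℝ) (hκ : 0 < κ) (hκε : κ + ε < 1) :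
    partialDiam μ (1 - (κ + ε)) ≤ partialDiam ν (1 - κ) + ENNReal.ofReal (2 * ε) := by
  have hne : {ε : ℝ | 0 ≤ ε ∧ ∀ A : Set ℝ, MeasurableSet A →
      ν A ≤ μ (Metric.thickening ε A) + ENNReal.ofReal ε}.Nonempty := by
    refine ⟨1, by norm_num, fun A hA => ?_⟩
    calc ν A ≤ 1 := prob_le_one
    _ ≤ μ (Metric.thickening 1 A) + ENNReal.ofReal 1 := by
        simp [ENNReal.ofReal_one]
  obtain ⟨ε', hmem, hlt⟩ := exists_lt_of_csInf_lt hne h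
  obtain ⟨hε'0, hε'⟩ := hmem
  -- pointwise bound
  have key : ∀ I : Set ℝ, MeasurableSet I → ENNReal.ofReal (1 - κ) ≤ ν I →
      partialDiam μ (1 - (κ + ε)) ≤ EMetric.diam I + ENNReal.ofReal (2 * ε) := by
    intro I hI hνI
    have hμT : ENNReal.ofReal (1 - (κ + ε)) ≤ μ (Metric.thickening ε' I) := by
      have h1 : ν I ≤ μ (Metric.thickening ε' I) + ENNReal.ofReal ε' := hε' I hI
      have h2 : ENNReal.ofReal (1 - (κ + ε)) + ENNReal.ofReal ε' ≤
          μ (Metric.thickening ε' I) + ENNReal.ofReal ε' := by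
        calc ENNReal.ofReal (1 - (κ + ε)) + ENNReal.ofReal ε'
            = ENNReal.ofReal (1 - (κ + ε) + ε') := by
              rw [← ENNReal.ofReal_add (by linarith) hε'0]
          _ ≤ ENNReal.ofReal (1 - κ) := ENNReal.ofReal_le_ofReal (by linarith)
          _ ≤ ν I := hνI
          _ ≤ _ := h1
      exact (ENNReal.add_le_add_iff_right ENNReal.ofReal_ne_top).mp h2
    have hdiam : EMetric.diam (Metric.thickening ε' I) ≤
        EMetric.diam I + ENNReal.ofReal (2 * ε) := by
      have := Metric.ediam_thickening_le (s := I) ε'.toNNReal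
      rw [Real.coe_toNNReal ε' hε'0] at this
      refine this.trans (add_le_add_right ?_ _)
      calc (2 : ℝ≥0∞) * ENNReal.ofReal ε' ≤ 2 * ENNReal.ofReal ε :=
            mul_le_mul_right (ENNReal.ofReal_le_ofReal hlt.le) _
        _ = ENNReal.ofReal (2 * ε) := by
            rw [ENNReal.ofReal_mul (by norm_num)]; norm_num
    calc partialDiam μ (1 - (κ + ε)) ≤ EMetric.diam (Metric.thickening ε' I) :=
          iInf₂_le _ ⟨(Metric.isOpen_thickening).measurableSet, hμT⟩
      _ ≤ _ := hdiam
  have hrw : partialDiam ν (1 - κ) + ENNReal.ofReal (2 * ε) =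
      ⨅ I : {I : Set ℝ // MeasurableSet I ∧ ENNReal.ofReal (1 - κ) ≤ ν I},
        (EMetric.diam I.1 + ENNReal.ofReal (2 * ε)) := by
    rw [partialDiam, iInf_subtype', ENNReal.iInf_add]; rfl
  rw [hrw]
  exact le_iInf fun I => key I.1 I.2.1 I.2.2
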